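/- Let H be a complex Hilbert space, T : H → H a bounded linear operator, λ ∈ ℂ, and set A := T - λ·id. Assume: (i) the range of A is closed; (ii) the kernel of A is one-dimensional, spanned by a nonzero vector p; (iii) ker(A ∘ A) = ker(A); and (iv) the kernel of the Hilbert adjoint A* is one-dimensional, spanned by a nonzero vector p*. Then the inner product ⟨p*, p⟩ is nonzero. -/

import Mathlib

/-- For a bounded operator `T` on a complex Hilbert space and `A = T - λ·id` with
closed range, one-dimensional kernel `span {p}` equal to `ker (A ∘ A)`, and one-dimensional
adjoint kernel `span {p*}`, the pairing `⟪p*, p⟫` is nonzero. -/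
theorem adjoint_eigenvector_pairing_ne_zero
    {H : Type*} [NormedAddCommGroup H] [InnerProductSpace ℂ H] [CompleteSpace H]
    (T : H →L[ℂ] H) (lam : ℂ) (A : H →L[ℂ] H)
    (hA : A = T - lam • ContinuousLinearMap.id ℂ H)
    (hclosed : IsClosed (LinearMap.range (A : H →ₗ[ℂ] H) : Set H))
    (p : H) (hp : p ≠ 0)
    (hker : LinearMap.ker (A : H →ₗ[ℂ] H) = Submodule.span ℂ {p})
    (hker2 : LinearMap.ker ((A.comp A : H →L[ℂ] H) : H →ₗ[ℂ] H) = LinearMap.ker (A : H →ₗ[ℂ] H))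
    (pstar : H) (hpstar : pstar ≠ 0)
    (hkeradj : LinearMap.ker ((ContinuousLinearMap.adjoint A : H →L[ℂ] H) : H →ₗ[ℂ] H) = Submodule.span ℂ {pstar}) :
    (inner ℂ pstar p : ℂ) ≠ 0 := by
  intro h0
  -- ker A† = (range A)ᗮ
  have hkeq : LinearMap.ker ((ContinuousLinearMap.adjoint A : H →L[ℂ] H) : H →ₗ[ℂ] H)
      = (LinearMap.range (A : H →ₗ[ℂ] H))ᗮ := by
    ext x
    constructor
    · intro hx v hv
      obtain ⟨y, rfl⟩ := hv
      rw [ContinuousLinearMap.coe_coe, ← ContinuousLinearMap.adjoint_inner_right]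
      simp [(show ContinuousLinearMap.adjoint A x = 0 from LinearMap.mem_ker.mp hx)]
    · intro hx
      rw [LinearMap.mem_ker]
      have h := hx (A (ContinuousLinearMap.adjoint A x)) ⟨_, rfl⟩
      rw [← ContinuousLinearMap.adjoint_inner_right] at h
      exact inner_self_eq_zero.mp h
  -- p ∈ (ker A†)ᗮ
  have hpmem : p ∈ (LinearMap.ker ((ContinuousLinearMap.adjoint A : H →L[ℂ] H) : H →ₗ[ℂ] H))ᗮ := by
    rw [hkeradj]
    intro v hv
    obtain ⟨c, rfl⟩ := Submodule.mem_span_singleton.mp hv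
    rw [inner_smul_left, h0, mul_zero]
  rw [hkeq, (LinearMap.range (A : H →ₗ[ℂ] H)).orthogonal_orthogonal_eq_closure] at hpmem
  have hcl : (LinearMap.range (A : H →ₗ[ℂ] H)).topologicalClosure = LinearMap.range (A : H →ₗ[ℂ] H) :=
    le_antisymm ((LinearMap.range (A : H →ₗ[ℂ] H)).topologicalClosure_minimal le_rfl hclosed) (LinearMap.range (A : H →ₗ[ℂ] H)).le_topologicalClosure
  rw [hcl] at hpmem
  obtain ⟨q, hq⟩ := hpmem
  have hq2 : q ∈ LinearMap.ker ((A.comp A : H →L[ℂ] H) : H →ₗ[ℂ] H) := by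
    rw [LinearMap.mem_ker]
    have : p ∈ LinearMap.ker (A : H →ₗ[ℂ] H) := hker ▸ Submodule.mem_span_singleton_self p
    simpa [ContinuousLinearMap.comp_apply, (show A q = p from hq)] using LinearMap.mem_ker.mp this
  rw [hker2, LinearMap.mem_ker] at hq2
  exact hp (by rw [← hq, hq2])
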